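/- Let F be a field, V a vector space over F, n > 1, and D an n-determinant on V. Then D is antisymmetric: for all v_1, …, v_n ∈ V and all indices i < j ≤ n, interchanging the i-th and j-th arguments changes the sign of D, i.e. D(v_1,…,v_j,…,v_i,…,v_n) = −D(v_1,…,v_i,…,v_j,…,v_n). -/

import Mathlib

/-- The "main equation" for a function `D : V^n → F`:
for every `(n+1)`-tuple `v₁, …, vₙ, b`,
`D(v₁,…,vₙ) • b = ∑ₖ D(v₁,…,b,…,vₙ) • vₖ` (the `k`-th summand replaces `vₖ` by `b`). -/
def MainEq (F : Type*) {V : Type*} [Field F] [AddCommGroup V] [Module F V]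
    (n : ℕ) (D : (Fin n → V) → F) : Prop :=
  ∀ (v : Fin n → V) (b : V),
    D v • b = ∑ k : Fin n, D (Function.update v k b) • v k

/-- An `n`-determinant on `V`: a nonzero function `D : V^n → F` satisfying the main
equation, where moreover the dimension of `V` over `F` equals `n`. -/
def IsDeterminant (F V : Type*) [Field F] [AddCommGroup V] [Module F V]
    (n : ℕ) (D : (Fin n → V) → F) : Prop :=
  D ≠ 0 ∧ MainEq F n D ∧ Module.finrank F V = n

/-- `D : V^n → F` is multilinear: additive and homogeneous of degree 1
in each variable separately. -/
def IsMultilinearFn (F : Type*) {V : Type*} [Field F] [AddCommGroup V] [Module F V]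
    (n : ℕ) (D : (Fin n → V) → F) : Prop :=
  (∀ (v : Fin n → V) (k : Fin n) (u w : V),
      D (Function.update v k (u + w))
        = D (Function.update v k u) + D (Function.update v k w)) ∧
  (∀ (v : Fin n → V) (k : Fin n) (c : F) (u : V),
      D (Function.update v k (c • u)) = c * D (Function.update v k u))

/-- `D : V^n → F` is antisymmetric: interchanging any two arguments changes the sign. -/
def IsAntisymmetricFn (F : Type*) {V : Type*} [Field F] [AddCommGroup V] [Module F V]
    (n : ℕ) (D : (Fin n → V) → F) : Prop :=
  ∀ (v : Fin n → V) (i j : Fin n), i ≠ j → D (v ∘ Equiv.swap i j) = - D v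

theorem stmt_6 (F V : Type*) [Field F] [AddCommGroup V] [Module F V]
    (n : ℕ) (hn : 1 < n) (D : (Fin n → V) → F)
    (hD : IsDeterminant F V n D) :
    ∀ (v : Fin n → V) (i j : Fin n), i < j →
      D (v ∘ Equiv.swap i j) = - D v := by
  obtain ⟨hD0, hmain, hfin⟩ := hD
  have hcard : Fintype.card (Fin n) = Module.finrank F V := by simp [hfin]
  -- Step 1: if D v ≠ 0 then v is linearly independent
  have hA : ∀ v : Fin n → V, D v ≠ 0 → LinearIndependent F v := by
    intro v hv
    refine linearIndependent_of_top_le_span_of_card_eq_finrank ?_ hcard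
    intro b _
    have h := hmain v b
    have hb : b = (D v)⁻¹ • (D v • b) := by
      rw [smul_smul, inv_mul_cancel₀ hv, one_smul]
    rw [hb, h]
    exact Submodule.smul_mem _ _ (Submodule.sum_mem _ fun k _ =>
      Submodule.smul_mem _ _ (Submodule.subset_span ⟨k, rfl⟩))
  -- Step 2: D vanishes when two arguments coincide
  have halt : ∀ (v : Fin n → V) (i j : Fin n), i ≠ j → v i = v j → D v = 0 := by
    intro v i j hij hvij
    by_contra h
    exact hij ((hA v h).injective hvij)
  -- Step 3: D is linear in each slot
  have hlin : ∀ (v : Fin n → V) (k : Fin n),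
      ∃ f : V →ₗ[F] F, ∀ b, D (Function.update v k b) = f b := by
    intro v k
    by_cases h : ∀ b, D (Function.update v k b) = 0
    · exact ⟨0, fun b => by simp [h b]⟩
    push_neg at h
    obtain ⟨w, hw⟩ := h
    set u := Function.update v k w with hu
    have hind := hA u hw
    have : Nonempty (Fin n) := ⟨⟨0, by omega⟩⟩
    let B := basisOfLinearIndependentOfCardEqFinrank hind hcard
    have hB : ∀ j, B j = u j := fun j => by
      simp [B, coe_basisOfLinearIndependentOfCardEqFinrank]
    refine ⟨D u • B.coord k, fun b => ?_⟩
    have h2 := congrArg (B.coord k) (hmain u b)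
    rw [map_smul, map_sum] at h2
    have h3 : ∀ j : Fin n, B.coord k (u j) = if j = k then 1 else 0 := by
      intro j
      rw [← hB j, Module.Basis.coord_apply, B.repr_self_apply]
    simp only [smul_eq_mul, map_smul, h3, mul_ite, mul_one, mul_zero] at h2
    rw [Finset.sum_ite_eq' Finset.univ k _] at h2
    simp only [Finset.mem_univ, if_true] at h2
    have h4 : Function.update u k b = Function.update v k b := by
      rw [hu, Function.update_idem]
    rw [h4] at h2
    simpa using h2.symm
  -- Step 4: antisymmetry
  intro v i j hij
  have hij' : i ≠ j := hij.ne
  set a := v i with ha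
  set b := v j with hb
  set u : V → V → (Fin n → V) := fun x y =>
    Function.update (Function.update v i x) j y with hudef
  have hcomm : ∀ x y, u x y = Function.update (Function.update v j y) i x := by
    intro x y
    rw [hudef]
    exact Function.update_comm hij' x y v
  have huij : ∀ x y, (u x y) i = x ∧ (u x y) j = y := by
    intro x y
    constructor
    · simp [hudef, Function.update_apply, hij', hij'.symm]
    · simp [hudef]
  have key : D (u (a + b) (a + b)) = 0 :=
    halt _ i j hij' (by rw [(huij _ _).1, (huij _ _).2])
  obtain ⟨f, hf⟩ := hlin (Function.update v i (a + b)) j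
  have e1 : D (u (a + b) (a + b)) = D (u (a + b) a) + D (u (a + b) b) := by
    rw [hudef]; simp only []
    rw [hf, hf, hf, map_add]
  obtain ⟨g, hg⟩ := hlin (Function.update v j a) i
  have e2 : D (u (a + b) a) = D (u a a) + D (u b a) := by
    rw [hcomm, hcomm, hcomm, hg, hg, hg, map_add]
  obtain ⟨g', hg'⟩ := hlin (Function.update v j b) i
  have e3 : D (u (a + b) b) = D (u a b) + D (u b b) := by
    rw [hcomm, hcomm, hcomm, hg', hg', hg', map_add]
  have z1 : D (u a a) = 0 := halt _ i j hij' (by rw [(huij _ _).1, (huij _ _).2])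
  have z2 : D (u b b) = 0 := halt _ i j hij' (by rw [(huij _ _).1, (huij _ _).2])
  have z3 : u a b = v := by
    rw [hudef]; simp only [ha, hb, Function.update_eq_self]
  have hswap : v ∘ Equiv.swap i j = u b a := by
    funext x
    by_cases hx : x = i
    · subst hx
      simp [Equiv.swap_apply_left, (huij b a).1, hb, (huij (v j) a).1]
    by_cases hx' : x = j
    · subst hx'
      simp [Equiv.swap_apply_right, (huij b a).2, ha, (huij b (v i)).2]
    · simp [Equiv.swap_apply_of_ne_of_ne hx hx', hudef, Function.update_apply, hx, hx']
  rw [hswap]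
  rw [e1, e2, e3, z1, z2, z3, zero_add, add_zero] at key
  exact eq_neg_of_add_eq_zero_left key
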